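/- Suppose w_{il} ≥ 0 for all i,l, w_{ii} = 0 for all i, and a_i > Σ_l w_{il} for every customer i. Then the consumption game has a unique Nash equilibrium, and it is given in closed form by q* = (A − W)^{-1}·(B − Φ), where A = diag(a_1,…,a_N), B = (b_1,…,b_N)ᵀ and Φ = (φ_1,…,φ_N)ᵀ. That is: q* is a Nash equilibrium, and any Nash equilibrium q equals q*. -/
import Mathlib

lemma quad_max {a K q : ℝ} (ha : 0 < a) (h : a * q = K) (r : ℝ) :
    -(1/2) * a * r ^ 2 + K * r ≤ -(1/2) * a * q ^ 2 + K * q := by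
  subst h
  nlinarith [mul_nonneg ha.le (sq_nonneg (r - q))]

lemma quad_max_rev {a K q : ℝ} (ha : 0 < a)
    (h : ∀ r, -(1/2) * a * r ^ 2 + K * r ≤ -(1/2) * a * q ^ 2 + K * q) :
    a * q = K := by
  obtain ⟨t, ht⟩ : ∃ t, a * t = K := ⟨K / a, mul_div_cancel₀ K ha.ne'⟩
  subst ht
  have h1 := h t
  have h2 : a * (t - q) ^ 2 ≤ 0 := by nlinarith [h1]
  have h3 : (t - q) ^ 2 ≤ 0 := by
    by_contra h'
    push_neg at h'
    nlinarith [mul_pos ha h']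
  have h4 : (t - q) ^ 2 = 0 := le_antisymm h3 (sq_nonneg _)
  have h5 : t - q = 0 := pow_eq_zero_iff (n := 2) (by norm_num) |>.mp h4
  have : q = t := by linarith
  rw [this]

/-- If `w i l ≥ 0`, `w i i = 0` and `a i > ∑ l, w i l` for every `i`,
then the consumption game has a unique Nash equilibrium, given in closed form by
`q* = (A - W)⁻¹ ⬝ (B - Φ)`. -/
theorem statement3 (N : ℕ) (a b φ : Fin N → ℝ) (w : Fin N → Fin N → ℝ)
    (hw : ∀ i l, 0 ≤ w i l) (hdiag : ∀ i, w i i = 0)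
    (hdom : ∀ i, ∑ l, w i l < a i) :
    (∀ (i : Fin N) (r : ℝ),
        (fun (i : Fin N) (q : Fin N → ℝ) =>
            -(1/2) * a i * q i ^ 2 + b i * q i
              + q i * (∑ l, w i l * q l) - φ i * q i)
          i (Function.update (Matrix.mulVec (Matrix.diagonal a - Matrix.of w)⁻¹ (fun i => b i - φ i)) i r)
        ≤
        (fun (i : Fin N) (q : Fin N → ℝ) =>
            -(1/2) * a i * q i ^ 2 + b i * q i
              + q i * (∑ l, w i l * q l) - φ i * q i)
          i (Matrix.mulVec (Matrix.diagonal a - Matrix.of w)⁻¹ (fun i => b i - φ i)))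
    ∧
    (∀ q : Fin N → ℝ,
      (∀ (i : Fin N) (r : ℝ),
        (fun (i : Fin N) (q : Fin N → ℝ) =>
            -(1/2) * a i * q i ^ 2 + b i * q i
              + q i * (∑ l, w i l * q l) - φ i * q i)
          i (Function.update q i r)
        ≤
        (fun (i : Fin N) (q : Fin N → ℝ) =>
            -(1/2) * a i * q i ^ 2 + b i * q i
              + q i * (∑ l, w i l * q l) - φ i * q i)
          i q) →
      q = Matrix.mulVec (Matrix.diagonal a - Matrix.of w)⁻¹ (fun i => b i - φ i)) := by
  set M : Matrix (Fin N) (Fin N) ℝ := Matrix.diagonal a - Matrix.of w with hM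
  have hapos : ∀ i, 0 < a i := fun i =>
    lt_of_le_of_lt (Finset.sum_nonneg fun l _ => hw i l) (hdom i)
  -- determinant nonzero via strict diagonal dominance
  have hdet : M.det ≠ 0 := by
    apply det_ne_zero_of_sum_row_lt_diag
    intro k
    have hMkk : M k k = a k := by
      simp [hM, Matrix.diagonal_apply_eq, hdiag k]
    have hMkj : ∀ j ∈ Finset.univ.erase k, ‖M k j‖ = w k j := by
      intro j hj
      have hjk : j ≠ k := Finset.ne_of_mem_erase hj
      have : M k j = -(w k j) := by
        simp [hM, Matrix.diagonal_apply_ne' _ hjk]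
      rw [this]
      simp [abs_of_nonneg (hw k j)]
    rw [Finset.sum_congr rfl hMkj, hMkk]
    calc ∑ j ∈ Finset.univ.erase k, w k j ≤ ∑ j, w k j :=
          Finset.sum_le_sum_of_subset_of_nonneg (Finset.erase_subset _ _)
            (fun l _ _ => hw k l)
      _ < a k := hdom k
      _ ≤ ‖a k‖ := le_abs_self _
  have hinv : IsUnit M.det := isUnit_iff_ne_zero.mpr hdet
  have hMinv : M * M⁻¹ = 1 := Matrix.mul_nonsing_inv M hinv
  set c : Fin N → ℝ := fun i => b i - φ i with hc
  set qs : Fin N → ℝ := Matrix.mulVec M⁻¹ c with hqs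
  have hMq : M.mulVec qs = c := by
    rw [hqs, Matrix.mulVec_mulVec, hMinv, Matrix.one_mulVec]
  -- M.mulVec expression
  have hMmv : ∀ (q : Fin N → ℝ) (i : Fin N),
      M.mulVec q i = a i * q i - ∑ l, w i l * q l := by
    intro q i
    have h1 : (Matrix.diagonal a).mulVec q i = a i * q i := Matrix.mulVec_diagonal a q i
    have h2 : (Matrix.of w).mulVec q i = ∑ l, w i l * q l := rfl
    rw [hM, Matrix.sub_mulVec, Pi.sub_apply, h1, h2]
  -- sum over update is unchanged
  have hsum : ∀ (q : Fin N → ℝ) (i : Fin N) (r : ℝ),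
      ∑ l, w i l * Function.update q i r l = ∑ l, w i l * q l := by
    intro q i r
    apply Finset.sum_congr rfl
    intro l _
    rcases eq_or_ne l i with h | h
    · simp [h, hdiag]
    · rw [Function.update_of_ne h]
  constructor
  · intro i r
    simp only
    rw [hsum, Function.update_self]
    have heq : a i * qs i = b i + (∑ l, w i l * qs l) - φ i := by
      have := congrFun hMq i
      rw [hMmv] at this
      simp only [hc] at this
      linarith
    have := quad_max (a := a i) (K := b i + (∑ l, w i l * qs l) - φ i)
      (q := qs i) (hapos i) heq r
    ring_nf
    ring_nf at this
    linarith
  · intro q hq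
    have heq : M.mulVec q = c := by
      funext i
      rw [hMmv]
      have hi := hq i
      simp only [hsum q i, Function.update_self] at hi
      have key : a i * q i = b i + (∑ l, w i l * q l) - φ i := by
        apply quad_max_rev (hapos i)
        intro r
        have := hi r
        ring_nf
        ring_nf at this
        linarith
      simp only [hc]
      linarith
    have : M⁻¹.mulVec (M.mulVec q) = M⁻¹.mulVec c := by rw [heq]
    rwa [Matrix.mulVec_mulVec, Matrix.nonsing_inv_mul M hinv, Matrix.one_mulVec] at this
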